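/- Let N ≥ R+1 ≥ 2 and let p = (p_1, ..., p_{R+1}) be a probability distribution on [R+1] with at least R nonzero entries, each entry being an integer multiple of 1/N. Then the statistical distance between p and the uniform distribution on [R+1], namely (1/2)∑_{i=1}^{R+1} |p_i - 1/(R+1)|, is at most 1 - R/N. -/
import Mathlib


theorem sdu_full_support_upper (N R : ℕ) (hR : 1 ≤ R) (hN : R + 1 ≤ N)
    (p : Fin (R + 1) → ℝ) (hpos : ∀ i, 0 ≤ p i) (hsum : ∑ i, p i = 1)
    (hmult : ∀ i, ∃ k : ℕ, p i = (k : ℝ) / N)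
    (hsupp : R ≤ (Finset.univ.filter fun i => p i ≠ 0).card) :
    (1 / 2) * ∑ i, |p i - 1 / (R + 1)| ≤ 1 - (R : ℝ) / N := by
  have hN0 : (0:ℝ) < N := by
    have : 0 < N := by omega
    exact_mod_cast this
  set u : ℝ := 1 / (R + 1) with hu
  have hR1 : (0:ℝ) < (R:ℝ) + 1 := by positivity
  have hupos : 0 < u := by positivity
  have huN : 1 / (N:ℝ) ≤ u := by
    rw [hu]
    apply one_div_le_one_div_of_le hR1
    exact_mod_cast hN
  have key : ∀ i, |p i - u| = p i + u - 2 * min (p i) u := by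
    intro i
    rcases le_total (p i) u with h | h
    · rw [abs_of_nonpos (by linarith), min_eq_left h]; ring
    · rw [abs_of_nonneg (by linarith), min_eq_right h]; ring
  have hsumu : ∑ _i : Fin (R+1), u = 1 := by
    rw [Finset.sum_const]
    simp only [Finset.card_univ, Fintype.card_fin, nsmul_eq_mul, hu]
    push_cast
    field_simp
  have hsum2 : ∑ i, |p i - u| = 2 - 2 * ∑ i, min (p i) u := by
    simp_rw [key]
    rw [Finset.sum_sub_distrib, Finset.sum_add_distrib, hsum, hsumu, ← Finset.mul_sum]
    ring
  -- lower bound on sum of mins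
  have hminlb : (R:ℝ) / N ≤ ∑ i, min (p i) u := by
    have hsub : (Finset.univ.filter fun i => p i ≠ 0) ⊆ Finset.univ := Finset.filter_subset _ _
    have h1 : ∀ i ∈ (Finset.univ.filter fun i => p i ≠ 0), 1 / (N:ℝ) ≤ min (p i) u := by
      intro i hi
      simp only [Finset.mem_filter] at hi
      obtain ⟨k, hk⟩ := hmult i
      have hk1 : 1 ≤ k := by
        by_contra h
        push_neg at h
        interval_cases k
        simp at hk
        exact hi.2 hk
      have hpN : 1 / (N:ℝ) ≤ p i := by
        rw [hk]
        apply div_le_div_of_nonneg_right _ hN0.le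
        exact_mod_cast hk1
      exact le_min hpN huN
    calc (R:ℝ) / N = (R:ℝ) * (1 / N) := by ring
      _ ≤ ((Finset.univ.filter fun i => p i ≠ 0).card : ℝ) * (1 / N) := by
          apply mul_le_mul_of_nonneg_right _ (by positivity)
          exact_mod_cast hsupp
      _ ≤ ∑ i ∈ (Finset.univ.filter fun i => p i ≠ 0), min (p i) u := by
          have := Finset.card_nsmul_le_sum (Finset.univ.filter fun i => p i ≠ 0) (fun i => min (p i) u) (1 / (N:ℝ)) h1
          rw [nsmul_eq_mul] at this
          linarith
      _ ≤ ∑ i, min (p i) u := by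
          apply Finset.sum_le_sum_of_subset_of_nonneg hsub
          intro i _ _
          exact le_min (hpos i) hupos.le
  rw [hsum2]
  linarith
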